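/- Let (μ_t) be the Fisher-Rao gradient flow of the linear potential f(μ) = cᵀμ over P = ℝ^X_{≥0} ∩ L with μ_0 ∈ P ∩ ℝ^X_{>0}. Then for every t > 0, μ_t is the unique maximizer of μ ↦ cᵀμ - t⁻¹ D_KL(μ, μ_0) over P (central path property). -/

import Mathlib

open Finset

noncomputable def klGen {X : Type*} [Fintype X] (μ ν : X → ℝ) : ℝ :=
  ∑ x, (μ x * Real.log (μ x / ν x) - μ x + ν x)

def linVal {X : Type*} [Fintype X] (c μ : X → ℝ) : ℝ := ∑ x, c x * μ x

lemma klTerm_nonneg (a b : ℝ) (ha : 0 ≤ a) (hb : 0 < b) :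
    0 ≤ a * Real.log (a / b) - a + b := by
  rcases eq_or_lt_of_le ha with h | h
  · simp [← h]; positivity
  · have hlog : Real.log (b / a) ≤ b / a - 1 := Real.log_le_sub_one_of_pos (by positivity)
    have hd : Real.log (b / a) = Real.log b - Real.log a := Real.log_div hb.ne' h.ne'
    have hd2 : Real.log (a / b) = Real.log a - Real.log b := Real.log_div h.ne' hb.ne'
    have hba : a * (b / a) = b := by field_simp
    nlinarith [mul_le_mul_of_nonneg_left hlog ha]

lemma klTerm_pos (a b : ℝ) (ha : 0 ≤ a) (hb : 0 < b) (hne : a ≠ b) :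
    0 < a * Real.log (a / b) - a + b := by
  rcases eq_or_lt_of_le ha with h | h
  · simp [← h]; positivity
  · have hlog : Real.log (b / a) < b / a - 1 := by
      apply Real.log_lt_sub_one_of_pos (by positivity)
      intro hc
      exact hne (by field_simp at hc; linarith)
    have hd2 : Real.log (a / b) = Real.log a - Real.log b := Real.log_div h.ne' hb.ne'
    have hd : Real.log (b / a) = Real.log b - Real.log a := Real.log_div hb.ne' h.ne'
    have hba : a * (b / a) = b := by field_simp
    nlinarith [mul_lt_mul_of_pos_left hlog h]

lemma klGen_pos {X : Type*} [Fintype X] (p ν : X → ℝ)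
    (hp : ∀ x, 0 ≤ p x) (hν : ∀ x, 0 < ν x) (hne : p ≠ ν) :
    0 < klGen p ν := by
  obtain ⟨x0, hx0⟩ : ∃ x, p x ≠ ν x := by
    by_contra h; push_neg at h; exact hne (funext h)
  have : (0:ℝ) = ∑ _x : X, (0:ℝ) := by simp
  rw [klGen, this]
  apply Finset.sum_lt_sum
  · intro i _; exact klTerm_nonneg _ _ (hp i) (hν i)
  · exact ⟨x0, Finset.mem_univ _, klTerm_pos _ _ (hp x0) (hν x0) hx0⟩

theorem stmt8 {X : Type*} [Fintype X]
    (c : X → ℝ) (L : AffineSubspace ℝ (X → ℝ))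
    (P : Set (X → ℝ)) (hP : P = {p | (∀ x, 0 ≤ p x) ∧ p ∈ L})
    -- the Fisher-Rao gradient flow `(μ_t)_{t≥0} ⊆ int P` of `f(μ) = cᵀμ`
    (μ μ' : ℝ → X → ℝ) (μ0 : X → ℝ)
    (hinit : μ 0 = μ0) (hμ0pos : ∀ x, 0 < μ0 x) (hμ0L : μ0 ∈ L)
    (hpos : ∀ t ≥ (0:ℝ), ∀ x, 0 < μ t x)
    (hmem : ∀ t ≥ (0:ℝ), μ t ∈ L)
    (hder : ∀ t ≥ (0:ℝ), ∀ x, HasDerivAt (fun s => μ s x) (μ' t x) t)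
    -- ⟨∇²φ(μ_t) ∂_t μ_t, v⟩ = ⟨c, v⟩ for all tangent vectors v
    (hflow : ∀ t ≥ (0:ℝ), ∀ v ∈ L.direction,
      ∑ x, μ' t x * v x / μ t x = ∑ x, c x * v x) :
    -- central path property: `μ_t` is the unique maximizer of `cᵀμ - t⁻¹ D_KL(μ, μ_0)`
    ∀ t > (0:ℝ), μ t ∈ P ∧ ∀ p ∈ P, p ≠ μ t →
      linVal c p - t⁻¹ * klGen p μ0 < linVal c (μ t) - t⁻¹ * klGen (μ t) μ0 := by
  -- key integrated identity
  have key : ∀ t ≥ (0:ℝ), ∀ v ∈ L.direction,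
      ∑ x, v x * (Real.log (μ t x) - Real.log (μ0 x)) = t * ∑ x, c x * v x := by
    intro t ht v hv
    set g : ℝ → ℝ := fun s => (∑ x, v x * Real.log (μ s x)) - s * ∑ x, c x * v x with hg
    have hderg : ∀ s ≥ (0:ℝ), HasDerivAt g 0 s := by
      intro s hs
      have h1 : HasDerivAt (fun u => ∑ x, v x * Real.log (μ u x))
          (∑ x, v x * (μ' s x / μ s x)) s := by
        apply HasDerivAt.fun_sum
        intro x _
        exact ((hder s hs x).log (hpos s hs x).ne').const_mul (v x)
      have h2 : HasDerivAt (fun u : ℝ => u * ∑ x, c x * v x) (∑ x, c x * v x) s := by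
        simpa using (hasDerivAt_id s).mul_const (∑ x, c x * v x)
      have h3 := h1.sub h2
      have he : (∑ x, v x * (μ' s x / μ s x)) - ∑ x, c x * v x = 0 := by
        have := hflow s hs v hv
        rw [← this, sub_eq_zero]
        apply Finset.sum_congr rfl
        intro x _; ring
      rw [he] at h3
      exact h3
    have hconst : g t = g 0 := by
      rcases eq_or_lt_of_le ht with h | h
      · rw [← h]
      · have := constant_of_has_deriv_right_zero (f := g) (a := 0) (b := t)
          (fun s hs => ((hderg s hs.1).continuousAt).continuousWithinAt)
          (fun s hs => (hderg s hs.1).hasDerivWithinAt)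
        exact this t ⟨ht, le_refl t⟩
    simp only [hg, hinit, zero_mul, sub_zero] at hconst
    rw [Finset.mul_sum]
    have : ∀ x, v x * (Real.log (μ t x) - Real.log (μ0 x))
        = v x * Real.log (μ t x) - v x * Real.log (μ0 x) := fun x => by ring
    simp_rw [this, Finset.sum_sub_distrib]
    have hc : ∀ x, t * (c x * v x) = c x * v x * t := fun x => by ring
    simp_rw [hc]
    rw [← Finset.sum_mul]
    linarith [hconst]
  intro t ht
  have ht0 : (0:ℝ) ≤ t := le_of_lt ht
  have hμtP : μ t ∈ P := by
    rw [hP]; exact ⟨fun x => (hpos t ht0 x).le, hmem t ht0⟩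
  refine ⟨hμtP, ?_⟩
  intro p hpP hpne
  rw [hP] at hpP
  obtain ⟨hp0, hpL⟩ := hpP
  have hvdir : p - μ t ∈ L.direction :=
    AffineSubspace.vsub_mem_direction hpL (hmem t ht0)
  -- Claim 1: klGen p μ0 = klGen p (μ t) + ∑ p x * ℓ x + ∑ (μ0 x - μ t x)
  have claim1 : klGen p μ0 = klGen p (μ t)
      + (∑ x, p x * (Real.log (μ t x) - Real.log (μ0 x))) + ∑ x, (μ0 x - μ t x) := by
    unfold klGen
    rw [← Finset.sum_add_distrib, ← Finset.sum_add_distrib]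
    apply Finset.sum_congr rfl
    intro x _
    rcases eq_or_lt_of_le (hp0 x) with h | h
    · simp [← h]
    · rw [Real.log_div h.ne' (hμ0pos x).ne', Real.log_div h.ne' (hpos t ht0 x).ne']
      ring
  -- Claim 2
  have claim2 : ∑ x, p x * (Real.log (μ t x) - Real.log (μ0 x))
      = (∑ x, μ t x * (Real.log (μ t x) - Real.log (μ0 x)))
        + t * (linVal c p - linVal c (μ t)) := by
    have hk := key t ht0 (p - μ t) hvdir
    have hlhs : ∑ x, (p - μ t) x * (Real.log (μ t x) - Real.log (μ0 x))
        = (∑ x, p x * (Real.log (μ t x) - Real.log (μ0 x)))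
          - ∑ x, μ t x * (Real.log (μ t x) - Real.log (μ0 x)) := by
      rw [← Finset.sum_sub_distrib]
      apply Finset.sum_congr rfl
      intro x _; simp [Pi.sub_apply]; ring
    have hrhs : ∑ x, c x * (p - μ t) x = linVal c p - linVal c (μ t) := by
      unfold linVal
      rw [← Finset.sum_sub_distrib]
      apply Finset.sum_congr rfl
      intro x _; simp [Pi.sub_apply]; ring
    rw [hlhs, hrhs] at hk
    linarith
  -- Claim 3
  have claim3 : klGen (μ t) μ0 = (∑ x, μ t x * (Real.log (μ t x) - Real.log (μ0 x)))
      + ∑ x, (μ0 x - μ t x) := by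
    unfold klGen
    rw [← Finset.sum_add_distrib]
    apply Finset.sum_congr rfl
    intro x _
    rw [Real.log_div (hpos t ht0 x).ne' (hμ0pos x).ne']
    ring
  have main : klGen p μ0 = klGen p (μ t) + klGen (μ t) μ0
      + t * (linVal c p - linVal c (μ t)) := by
    rw [claim1, claim2, claim3]; ring
  have hklpos : 0 < klGen p (μ t) :=
    klGen_pos p (μ t) hp0 (hpos t ht0) hpne
  have htne : t ≠ 0 := ne_of_gt ht
  have hdiv : t⁻¹ * klGen p μ0 = t⁻¹ * klGen p (μ t) + t⁻¹ * klGen (μ t) μ0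
      + (linVal c p - linVal c (μ t)) := by
    rw [main]; field_simp
  have : 0 < t⁻¹ * klGen p (μ t) := by positivity
  linarith
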